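/- arXiv:1505.06070 — 8 statements merged into one kernel-verified Lean document; each statement's English description precedes it below -/
import Mathlib

section
/- Let $W_k$ be a nonnegative stochastic process with $\sigma(W_k) \subset \mathcal{F}_{k-1}$, $I_k$ indicator random variables with $P(I_k = 1 \mid \mathcal{F}_{k-1}) \geq p$, and $N$ a stopping time with $\{k < N\} \in \mathcal{F}_{k-1}$. Then $\mathbb{E}\left(\sum_{k=0}^{N-1} W_k (1 - I_k)\right) \leq (1-p)\, \mathbb{E}\left(\sum_{k=0}^{N-1} W_k\right)$. -/
open MeasureTheory ENNReal

lemma aux_lin {Ω : Type*} {m m0 : MeasurableSpace Ω} (hm : m ≤ m0) (μ : Measure Ω)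
    [IsProbabilityMeasure μ]
    (f : Ω → ℝ) (hf : Measurable[m] f) (hf0 : ∀ ω, 0 ≤ f ω) (C : ℝ) (hfC : ∀ ω, f ω ≤ C)
    (I : Ω → ℝ) (hI : Measurable I) (hI01 : ∀ ω, I ω = 0 ∨ I ω = 1)
    (p : ℝ) (hp1 : p ≤ 1) (hcond : ∀ᵐ ω ∂μ, p ≤ (μ[I | m]) ω) :
    ∫⁻ ω, ENNReal.ofReal (f ω * (1 - I ω)) ∂μ ≤
      ENNReal.ofReal (1 - p) * ∫⁻ ω, ENNReal.ofReal (f ω) ∂μ := by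
  have hfm0 : Measurable f := hf.mono hm le_rfl
  have hfbd : ∀ᵐ ω ∂μ, ‖f ω‖ ≤ C := ae_of_all _ fun ω => by
    rw [Real.norm_eq_abs, abs_of_nonneg (hf0 ω)]; exact hfC ω
  have hfint : Integrable f μ :=
    ⟨hfm0.aestronglyMeasurable, (hasFiniteIntegral_const C).mono' hfbd⟩
  have hIbd : ∀ ω, ‖I ω‖ ≤ 1 := fun ω => by rcases hI01 ω with h | h <;> simp [h]
  have hIint : Integrable I μ :=
    ⟨hI.aestronglyMeasurable, (hasFiniteIntegral_const 1).mono' (ae_of_all _ hIbd)⟩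
  have hfI : Integrable (fun ω => f ω * I ω) μ :=
    hIint.bdd_mul hfm0.aestronglyMeasurable hfbd
  -- pull-out property
  have key : μ[fun ω => f ω * I ω | m] =ᵐ[μ] fun ω => f ω * (μ[I|m]) ω :=
    condExp_stronglyMeasurable_mul_of_bound hm hf.stronglyMeasurable hIint C hfbd
  have hfcond : Integrable (fun ω => f ω * (μ[I|m]) ω) μ :=
    integrable_condExp.bdd_mul hfm0.aestronglyMeasurable hfbd
  have h1 : ∫ ω, f ω * I ω ∂μ = ∫ ω, f ω * (μ[I|m]) ω ∂μ := by
    rw [← integral_condExp hm]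
    exact integral_congr_ae key
  have h2 : p * ∫ ω, f ω ∂μ ≤ ∫ ω, f ω * I ω ∂μ := by
    rw [h1, mul_comm, ← integral_mul_const]
    refine integral_mono_ae (hfint.mul_const p) hfcond ?_
    filter_upwards [hcond] with ω hω
    exact mul_le_mul_of_nonneg_left hω (hf0 ω)
  have hsub : (fun ω => f ω * (1 - I ω)) = fun ω => f ω - f ω * I ω := by
    funext ω; ring
  have hfsint : Integrable (fun ω => f ω * (1 - I ω)) μ := by
    rw [hsub]; exact hfint.sub hfI
  have hreal : ∫ ω, f ω * (1 - I ω) ∂μ ≤ (1 - p) * ∫ ω, f ω ∂μ := by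
    have : ∫ ω, f ω * (1 - I ω) ∂μ = ∫ ω, f ω ∂μ - ∫ ω, f ω * I ω ∂μ := by
      rw [hsub, integral_sub hfint hfI]
    rw [this]; nlinarith
  have hnn : 0 ≤ᵐ[μ] fun ω => f ω * (1 - I ω) := ae_of_all _ fun ω => by
    rcases hI01 ω with h | h <;> simp [h, hf0 ω]
  rw [← ofReal_integral_eq_lintegral_ofReal hfsint hnn,
    ← ofReal_integral_eq_lintegral_ofReal hfint (ae_of_all _ hf0),
    ← ENNReal.ofReal_mul (by linarith : (0:ℝ) ≤ 1 - p)]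
  exact ENNReal.ofReal_le_ofReal hreal

lemma sup_min_ofReal (a : ℝ) : ⨆ n : ℕ, ENNReal.ofReal (min a n) = ENNReal.ofReal a := by
  refine le_antisymm (iSup_le fun n => ENNReal.ofReal_le_ofReal (min_le_left _ _)) ?_
  refine le_iSup_of_le ⌈a⌉₊ ?_
  rcases le_or_gt a 0 with h | h
  · simp [ENNReal.ofReal_of_nonpos, h, min_le_of_left_le h]
  · rw [min_eq_left (Nat.le_ceil a)]

lemma aux_k {Ω : Type*} {m m0 : MeasurableSpace Ω} (hm : m ≤ m0) (μ : Measure Ω)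
    [IsProbabilityMeasure μ]
    (W : Ω → ℝ) (hW0 : ∀ ω, 0 ≤ W ω) (hWm : Measurable[m] W)
    (I : Ω → ℝ) (hI : Measurable I) (hI01 : ∀ ω, I ω = 0 ∨ I ω = 1)
    (p : ℝ) (hp1 : p ≤ 1) (hcond : ∀ᵐ ω ∂μ, p ≤ (μ[I | m]) ω)
    (N : Ω → ℕ∞) (k : ℕ) (hN : MeasurableSet[m] {ω | (k : ℕ∞) < N ω}) :
    ∫⁻ ω, (if (k : ℕ∞) < N ω then ENNReal.ofReal (W ω * (1 - I ω)) else 0) ∂μ ≤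
      ENNReal.ofReal (1 - p) * ∫⁻ ω, (if (k : ℕ∞) < N ω then ENNReal.ofReal (W ω) else 0) ∂μ := by
  set G : ℕ → Ω → ℝ := fun n ω => if (k : ℕ∞) < N ω then min (W ω) n else 0 with hG
  have hGm : ∀ n, Measurable[m] (G n) := fun n =>
    Measurable.ite hN (hWm.min measurable_const) measurable_const
  have hG0 : ∀ n ω, 0 ≤ G n ω := by
    intro n ω; simp only [hG]
    split
    · exact le_min (hW0 ω) (Nat.cast_nonneg n)
    · exact le_rfl
  have hGC : ∀ n ω, G n ω ≤ (n : ℝ) := by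
    intro n ω; simp only [hG]
    split
    · exact min_le_right _ _
    · exact Nat.cast_nonneg n
  have hmono : ∀ c : ℝ, 0 ≤ c → Monotone fun n : ℕ => fun ω => ENNReal.ofReal (G n ω * c) := by
    intro c hc n₁ n₂ h ω
    refine ENNReal.ofReal_le_ofReal (mul_le_mul_of_nonneg_right ?_ hc)
    simp only [hG]
    split
    · exact min_le_min le_rfl (Nat.cast_le.2 h)
    · exact le_rfl
  have hsup : ∀ c : ℝ, c = 0 ∨ c = 1 → ∀ ω,
      (⨆ n : ℕ, ENNReal.ofReal (G n ω * c)) =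
        (if (k : ℕ∞) < N ω then ENNReal.ofReal (W ω * c) else 0) := by
    intro c hc ω
    rcases hc with rfl | rfl
    · simp
    · simp only [mul_one, hG]
      split
      · exact sup_min_ofReal (W ω)
      · simp
  have hGmeas : ∀ (n : ℕ) (c : Ω → ℝ), Measurable c →
      Measurable fun ω => ENNReal.ofReal (G n ω * c ω) := by
    intro n c hcm
    exact (((hGm n).mono hm le_rfl).mul hcm).ennreal_ofReal
  -- left side as a sup
  have hL : ∫⁻ ω, (if (k : ℕ∞) < N ω then ENNReal.ofReal (W ω * (1 - I ω)) else 0) ∂μ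
      = ⨆ n : ℕ, ∫⁻ ω, ENNReal.ofReal (G n ω * (1 - I ω)) ∂μ := by
    rw [← lintegral_iSup (fun n => hGmeas n (fun ω => 1 - I ω) (measurable_const.sub hI))
      (fun n₁ n₂ h => by
        intro ω
        rcases hI01 ω with h1 | h1
        · simpa [h1] using hmono 1 zero_le_one h ω
        · simp [h1])]
    refine lintegral_congr fun ω => ?_
    rcases hI01 ω with h1 | h1
    · rw [show (1 : ℝ) - I ω = 1 by rw [h1]; ring] at *
      exact (hsup 1 (Or.inr rfl) ω).symm
    · rw [show (1 : ℝ) - I ω = 0 by rw [h1]; ring]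
      simp
  have hR : ∫⁻ ω, (if (k : ℕ∞) < N ω then ENNReal.ofReal (W ω) else 0) ∂μ
      = ⨆ n : ℕ, ∫⁻ ω, ENNReal.ofReal (G n ω) ∂μ := by
    rw [← lintegral_iSup (fun n => (by simpa using hGmeas n (fun _ => 1) measurable_const))
      (fun n₁ n₂ h ω => by simpa using hmono 1 zero_le_one h ω)]
    refine lintegral_congr fun ω => ?_
    simpa using (hsup 1 (Or.inr rfl) ω).symm
  rw [hL, hR, ENNReal.mul_iSup]
  refine iSup_le fun n => le_iSup_of_le n ?_
  exact aux_lin hm μ (G n) (hGm n) (fun ω => hG0 n ω) n (hGC n) I hI hI01 p hp1 hcond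

/-- Lemma 2.1 (second inequality): `E (∑_{k<N} W k * (1 - I k)) ≤ (1-p) * E (∑_{k<N} W k)`. -/
theorem stmt_1
    {Ω : Type*} {m0 : MeasurableSpace Ω} (μ : Measure Ω) [IsProbabilityMeasure μ]
    (𝒢 : ℕ → MeasurableSpace Ω) (h𝒢 : ∀ k, 𝒢 k ≤ m0)
    (W : ℕ → Ω → ℝ) (hWnonneg : ∀ k ω, 0 ≤ W k ω)
    (hWmeas : ∀ k, Measurable[𝒢 k] (W k))
    (I : ℕ → Ω → ℝ) (hImeas : ∀ k, Measurable (I k))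
    (hIind : ∀ k ω, I k ω = 0 ∨ I k ω = 1)
    (p : ℝ) (hp : 0 ≤ p) (hp1 : p ≤ 1)
    (hcond : ∀ k, ∀ᵐ ω ∂μ, p ≤ (μ[I k | 𝒢 k]) ω)
    (N : Ω → ℕ∞)
    (hN : ∀ k : ℕ, MeasurableSet[𝒢 k] {ω | (k : ℕ∞) < N ω}) :
    ∫⁻ ω, ∑' k : ℕ,
        (if (k : ℕ∞) < N ω then ENNReal.ofReal (W k ω * (1 - I k ω)) else 0) ∂μ ≤
      ENNReal.ofReal (1 - p) * ∫⁻ ω, ∑' k : ℕ,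
        (if (k : ℕ∞) < N ω then ENNReal.ofReal (W k ω) else 0) ∂μ := by
  have hNk : ∀ k : ℕ, MeasurableSet[m0] {ω | (k : ℕ∞) < N ω} := fun k => h𝒢 k _ (hN k)
  rw [lintegral_tsum (fun k => (Measurable.ite (hNk k)
      (show Measurable (fun ω => W k ω * (1 - I k ω)) from
        ((hWmeas k).mono (h𝒢 k) le_rfl).mul (measurable_const.sub (hImeas k))).ennreal_ofReal
      measurable_const).aemeasurable),
    lintegral_tsum (fun k => (Measurable.ite (hNk k)
      ((hWmeas k).mono (h𝒢 k) le_rfl).ennreal_ofReal measurable_const).aemeasurable),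
    ← ENNReal.tsum_mul_left]
  exact ENNReal.tsum_le_tsum fun k =>
    aux_k (h𝒢 k) μ (W k) (hWnonneg k) (hWmeas k) (I k) (hImeas k) (hIind k) p hp1
      (hcond k) N k (hN k)
end

section
/- Consider a sequence $(\alpha_k)_{k \geq 0}$ of positive reals with $\alpha_0 \geq C > 0$, evolving by the rule: on 'successful' steps $\alpha_{k+1} = \min\{\alpha_{\max}, \gamma^{-1}\alpha_k\}$ and on 'unsuccessful' steps $\alpha_{k+1} = \gamma\alpha_k$, where $\gamma \in (0,1)$. Then for any $l$, the number of indices $k \leq l$ that are successful and satisfy $\alpha_k \leq C$ is at most $(l+1)/2$. -/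
/-- Lemma 2.2: at most half of the iterations `k ≤ l` can be successful with `α k ≤ C`. -/
theorem stmt_2
    (γ C αmax : ℝ) (α : ℕ → ℝ) (success : ℕ → Bool)
    (hγ0 : 0 < γ) (hγ1 : γ < 1)
    (hC : 0 < C) (hCα0 : C ≤ α 0)
    (hα0max : α 0 < αmax)
    (c : ℕ) (hc : 1 ≤ c) (hCval : C = γ ^ c * α 0)
    (hCmax : C < γ * αmax)
    (hsucc : ∀ k, success k = true → α (k + 1) = min αmax (γ⁻¹ * α k))
    (hfail : ∀ k, success k = false → α (k + 1) = γ * α k)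
    (l : ℕ) :
    (((Finset.range (l + 1)).filter (fun k => success k = true ∧ α k ≤ C)).card : ℝ) ≤
      (l + 1) / 2 := by
  classical
  have hα0pos : 0 < α 0 := lt_of_lt_of_le hC hCα0
  have hαmaxpos : 0 < αmax := lt_trans hα0pos hα0max
  have hγinv : 1 ≤ γ⁻¹ := one_le_inv₀ hγ0 |>.mpr hγ1.le
  have hpos : ∀ n, 0 < α n := by
    intro n; induction n with
    | zero => exact hα0pos
    | succ n ih =>
      cases hs : success n with
      | false => rw [hfail n hs]; positivity
      | true =>
        rw [hsucc n hs]
        exact lt_min hαmaxpos (by positivity)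
  have hlemax : ∀ n, α n ≤ αmax := by
    intro n; induction n with
    | zero => exact hα0max.le
    | succ n ih =>
      cases hs : success n with
      | false =>
        rw [hfail n hs]
        nlinarith [hpos n]
      | true => rw [hsucc n hs]; exact min_le_left _ _
  have hsuccmono : ∀ n, success n = true → α n ≤ α (n + 1) := by
    intro n hs
    rw [hsucc n hs]
    refine le_min (hlemax n) ?_
    nlinarith [hpos n]
  have hbadstep : ∀ n, success n = true → α n ≤ C → α (n + 1) = γ⁻¹ * α n := by
    intro n hs hle
    rw [hsucc n hs, min_eq_right]
    rw [inv_mul_le_iff₀ hγ0]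
    exact le_of_lt (lt_of_le_of_lt hle hCmax)
  set B : ℕ → ℕ := fun n =>
    ((Finset.range n).filter (fun k => success k = true ∧ α k ≤ C)).card with hB
  set F : ℕ → ℕ := fun n =>
    ((Finset.range n).filter (fun k => success k = false)).card with hF
  have hBsucc : ∀ n, (success n = true ∧ α n ≤ C → B (n + 1) = B n + 1) ∧
      (¬(success n = true ∧ α n ≤ C) → B (n + 1) = B n) := by
    intro n
    constructor <;> intro h <;>
      simp [hB, Finset.range_add_one, Finset.filter_insert, h,
        Finset.card_insert_of_notMem (by simp : n ∉ Finset.range n)]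
  have hFsucc : ∀ n, (success n = false → F (n + 1) = F n + 1) ∧
      (success n = true → F (n + 1) = F n) := by
    intro n
    constructor <;> intro h <;>
      simp [hF, Finset.range_add_one, Finset.filter_insert, h,
        Finset.card_insert_of_notMem (by simp : n ∉ Finset.range n)]
  have hinv : ∀ n, γ ^ ((F n : ℤ) - (B n : ℤ)) * α 0 ≤ α n := by
    intro n; induction n with
    | zero => simp [hB, hF]
    | succ n ih =>
      cases hs : success n with
      | false =>
        rw [hfail n hs, (hFsucc n).1 hs, (hBsucc n).2 (by simp [hs])]
        push_cast
        have : γ ^ ((F n : ℤ) + 1 - (B n : ℤ)) * α 0 = γ * (γ ^ ((F n : ℤ) - (B n : ℤ)) * α 0) := by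
          rw [← mul_assoc, ← zpow_one_add₀ (ne_of_gt hγ0)]; ring_nf
        rw [this]
        exact mul_le_mul_of_nonneg_left ih hγ0.le
      | true =>
        by_cases hb : α n ≤ C
        · rw [hbadstep n hs hb, (hFsucc n).2 hs, (hBsucc n).1 ⟨hs, hb⟩]
          push_cast
          have : γ ^ ((F n : ℤ) - ((B n : ℤ) + 1)) * α 0
              = γ⁻¹ * (γ ^ ((F n : ℤ) - (B n : ℤ)) * α 0) := by
            rw [← mul_assoc, ← zpow_neg_one, ← zpow_add₀ (ne_of_gt hγ0)]; ring_nf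
          rw [this]
          exact mul_le_mul_of_nonneg_left ih (by positivity)
        · rw [(hFsucc n).2 hs, (hBsucc n).2 (by simp [hb])]
          exact le_trans ih (hsuccmono n hs)
  have hBF : ∀ n, B n ≤ F n := by
    intro n; induction n with
    | zero => simp [hB, hF]
    | succ n ih =>
      by_cases hb : success n = true ∧ α n ≤ C
      · have h1 := hinv n
        have h2 : α n ≤ γ ^ (c : ℤ) * α 0 := by
          rw [zpow_natCast, ← hCval]; exact hb.2
        have h3 : γ ^ ((F n : ℤ) - (B n : ℤ)) ≤ γ ^ (c : ℤ) := by
          have := le_trans h1 h2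
          exact le_of_mul_le_mul_right this hα0pos
        have h4 : (c : ℤ) ≤ (F n : ℤ) - (B n : ℤ) :=
          (zpow_le_zpow_iff_right_of_lt_one₀ hγ0 hγ1).mp h3
        have h5 : (B n : ℤ) < (F n : ℤ) := by
          have : (1 : ℤ) ≤ c := by exact_mod_cast hc
          omega
        rw [(hBsucc n).1 hb, (hFsucc n).2 hb.1]
        omega
      · rw [(hBsucc n).2 hb]
        cases hs : success n with
        | false => rw [(hFsucc n).1 hs]; omega
        | true => rw [(hFsucc n).2 hs]; omega
  have hTF : B (l + 1) + F (l + 1) ≤ l + 1 := by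
    have hsub : B (l + 1) ≤
        ((Finset.range (l + 1)).filter (fun k => success k = true)).card := by
      apply Finset.card_le_card
      intro x hx
      simp only [Finset.mem_filter] at hx ⊢
      exact ⟨hx.1, hx.2.1⟩
    have heq : ((Finset.range (l + 1)).filter (fun k => success k = true)).card +
        F (l + 1) = l + 1 := by
      have := Finset.card_filter_add_card_filter_not
        (s := Finset.range (l + 1)) (p := fun k => success k = true)
      simpa [hF, Bool.not_eq_true] using this
    omega
  have hfin : 2 * B (l + 1) ≤ l + 1 := by
    have := hBF (l + 1); omega
  have : (B (l + 1) : ℝ) ≤ (l + 1) / 2 := by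
    rw [le_div_iff₀ (by norm_num : (0:ℝ) < 2)]
    have h2 : ((2 * B (l + 1) : ℕ) : ℝ) ≤ ((l + 1 : ℕ) : ℝ) := by exact_mod_cast hfin
    push_cast at h2 ⊢
    linarith
  simpa [hB] using this
end

section
/- Let $f : \mathbb{R}^n \to \mathbb{R}$ be continuously differentiable with $L$-Lipschitz gradient. Let $x, g \in \mathbb{R}^n$, $\alpha > 0$, $\theta \in (0,1)$, $\kappa > 0$, and suppose $\|g - \nabla f(x)\| \leq \kappa \alpha \|g\|$. If $\alpha \leq \frac{1-\theta}{L/2 + \kappa}$, then $f(x - \alpha g) \leq f(x) - \alpha \theta \|g\|^2$. -/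
open scoped RealInnerProductSpace

lemma descent_aux
    {n : ℕ} (f : EuclideanSpace ℝ (Fin n) → ℝ) (L : ℝ) (hL : 0 ≤ L)
    (hdiff : Differentiable ℝ f)
    (hLip : ∀ x y, ‖gradient f x - gradient f y‖ ≤ L * ‖x - y‖)
    (x s : EuclideanSpace ℝ (Fin n)) :
    f (x + s) ≤ f x + ⟪gradient f x, s⟫ + L / 2 * ‖s‖ ^ 2 := by
  set ψ : ℝ → ℝ := fun t => f (x + t • s) - t * ⟪gradient f x, s⟫ - L * t ^ 2 / 2 * ‖s‖ ^ 2 with hψ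
  have hder : ∀ t : ℝ, HasDerivAt ψ
      (⟪gradient f (x + t • s), s⟫ - ⟪gradient f x, s⟫ - L * t * ‖s‖ ^ 2) t := by
    intro t
    have h1 : HasDerivAt (fun t : ℝ => x + t • s) s t := by
      simpa using ((hasDerivAt_id t).smul_const s).const_add x
    have h2 := ((hdiff (x + t • s)).hasGradientAt).hasFDerivAt
    have h3 : HasDerivAt (fun t : ℝ => f (x + t • s))
        ⟪gradient f (x + t • s), s⟫ t := by
      exact (h2.comp_hasDerivAt t h1).congr_deriv (by simp [InnerProductSpace.toDual_apply_apply])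
    have h4 : HasDerivAt (fun t : ℝ => t * ⟪gradient f x, s⟫)
        ⟪gradient f x, s⟫ t := by
      simpa using (hasDerivAt_id t).mul_const ⟪gradient f x, s⟫
    have h5 : HasDerivAt (fun t : ℝ => L * t ^ 2 / 2 * ‖s‖ ^ 2)
        (L * t * ‖s‖ ^ 2) t := by
      have := ((hasDerivAt_pow 2 t).const_mul L).div_const 2
      have := this.mul_const (‖s‖ ^ 2)
      exact this.congr_deriv (by push_cast; ring)
    exact (h3.sub h4).sub h5
  have hmono : AntitoneOn ψ (Set.Icc 0 1) := by
    apply antitoneOn_of_deriv_nonpos (convex_Icc 0 1)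
    · exact fun t _ => (hder t).differentiableAt.continuousAt.continuousWithinAt
    · intro t _
      exact (hder t).differentiableAt.differentiableWithinAt
    · intro t ht
      rw [interior_Icc] at ht
      rw [(hder t).deriv]
      have hb : ‖gradient f (x + t • s) - gradient f x‖ ≤ L * t * ‖s‖ := by
        have := hLip (x + t • s) x
        simpa [norm_smul, abs_of_nonneg ht.1.le, mul_assoc] using this
      have hinner : ⟪gradient f (x + t • s), s⟫ - ⟪gradient f x, s⟫
          ≤ L * t * ‖s‖ ^ 2 := by
        have h1 : ⟪gradient f (x + t • s) - gradient f x, s⟫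
            ≤ ‖gradient f (x + t • s) - gradient f x‖ * ‖s‖ :=
          real_inner_le_norm _ _
        have h2 : ‖gradient f (x + t • s) - gradient f x‖ * ‖s‖ ≤ L * t * ‖s‖ * ‖s‖ :=
          mul_le_mul_of_nonneg_right hb (norm_nonneg s)
        calc ⟪gradient f (x + t • s), s⟫ - ⟪gradient f x, s⟫
            = ⟪gradient f (x + t • s) - gradient f x, s⟫ := by
              rw [inner_sub_left]
          _ ≤ L * t * ‖s‖ * ‖s‖ := le_trans h1 h2
          _ = L * t * ‖s‖ ^ 2 := by ring
      linarith
  have h01 : ψ 1 ≤ ψ 0 := hmono ⟨le_rfl, zero_le_one⟩ ⟨zero_le_one, le_rfl⟩ zero_le_one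
  have e1 : ψ 1 = f (x + s) - ⟪gradient f x, s⟫ - L * 1 ^ 2 / 2 * ‖s‖ ^ 2 := by
    simp [hψ]
  have e0 : ψ 0 = f x := by simp [hψ]
  rw [e1, e0] at h01
  nlinarith [h01]

/-- Lemma 3.1: linesearch sufficient decrease with a probabilistically accurate gradient. -/
theorem stmt_7
    {n : ℕ} (f : EuclideanSpace ℝ (Fin n) → ℝ) (L : ℝ) (hL : 0 < L)
    (hdiff : Differentiable ℝ f)
    (hLip : ∀ x y, ‖gradient f x - gradient f y‖ ≤ L * ‖x - y‖)
    (x g : EuclideanSpace ℝ (Fin n)) (α θ κ : ℝ)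
    (hα : 0 < α) (hθ0 : 0 < θ) (hθ1 : θ < 1) (hκ : 0 < κ)
    (hacc : ‖g - gradient f x‖ ≤ κ * α * ‖g‖)
    (hαsmall : α ≤ (1 - θ) / (L / 2 + κ)) :
    f (x - α • g) ≤ f x - α * θ * ‖g‖ ^ 2 := by
  have hdesc := descent_aux f L hL.le hdiff hLip x (-(α • g))
  rw [← sub_eq_add_neg] at hdesc
  have hnorm : ‖-(α • g)‖ = α * ‖g‖ := by
    rw [norm_neg, norm_smul, Real.norm_eq_abs, abs_of_pos hα]
  rw [hnorm] at hdesc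
  have hinner : ⟪gradient f x, -(α • g)⟫ = -α * ⟪gradient f x, g⟫ := by
    rw [inner_neg_right, real_inner_smul_right]; ring
  rw [hinner] at hdesc
  -- lower bound on ⟪∇f x, g⟫
  have hlb : ⟪gradient f x, g⟫ ≥ ‖g‖ ^ 2 - κ * α * ‖g‖ ^ 2 := by
    have h1 : ⟪gradient f x - g, g⟫ ≥ -(κ * α * ‖g‖ ^ 2) := by
      have h2 : |⟪gradient f x - g, g⟫| ≤ ‖gradient f x - g‖ * ‖g‖ :=
        abs_real_inner_le_norm _ _
      have h3 : ‖gradient f x - g‖ ≤ κ * α * ‖g‖ := by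
        rw [norm_sub_rev]; exact hacc
      have h4 : ‖gradient f x - g‖ * ‖g‖ ≤ κ * α * ‖g‖ * ‖g‖ :=
        mul_le_mul_of_nonneg_right h3 (norm_nonneg g)
      have := (abs_le.mp (h2.trans h4)).1
      nlinarith [this]
    have h5 : ⟪gradient f x, g⟫ = ⟪gradient f x - g, g⟫ + ⟪g, g⟫ := by
      rw [inner_sub_left]; ring
    rw [h5, real_inner_self_eq_norm_sq]
    nlinarith
  have hsum : 0 < L / 2 + κ := by linarith
  have hθα : (L / 2 + κ) * α ≤ 1 - θ := by
    rw [← le_div_iff₀' hsum] ; exact hαsmall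
  nlinarith [hdesc, sq_nonneg ‖g‖, mul_pos hα hα]
end

section
/- Let $f : \mathbb{R}^n \to \mathbb{R}$ be convex and differentiable with minimizer $x^*$, and assume $\|x - x^*\| \leq D$ for all $x$ in the relevant level set. Let $x^k$ satisfy $f(x^k) \leq f(x^0)$, let $g^k$ satisfy $\|\nabla f(x^k)\| \leq (1 + \kappa\alpha_{\max})\|g^k\|$, and suppose $f(x^{k+1}) \leq f(x^k) - \theta \alpha_k \|g^k\|^2$ with $f(x^{k+1}) > f(x^*)$. Then, with $\Delta_j = f(x^j) - f(x^*)$, $\frac{1}{\Delta_{k+1}} - \frac{1}{\Delta_k} \geq \frac{\theta \alpha_k}{D^2 (1 + \kappa \alpha_{\max})^2}$. -/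
open scoped RealInnerProductSpace

lemma grad_lower_bound {n : ℕ} (f : EuclideanSpace ℝ (Fin n) → ℝ)
    (hdiff : Differentiable ℝ f) (hconv : ConvexOn ℝ Set.univ f)
    (x y : EuclideanSpace ℝ (Fin n)) :
    ⟪gradient f x, y - x⟫ ≤ f y - f x := by
  set c : ℝ →ᵃ[ℝ] EuclideanSpace ℝ (Fin n) := AffineMap.lineMap x y with hc
  set g : ℝ → ℝ := f ∘ c with hg
  have hgconv : ConvexOn ℝ Set.univ g := by
    have := hconv.comp_affineMap c
    simpa using this
  -- derivative of g at t
  have hcurve : ∀ t : ℝ, HasDerivAt (fun t : ℝ => x + t • (y - x)) (y - x) t := by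
    intro t
    have h1 : HasDerivAt (fun t : ℝ => t • (y - x)) ((1 : ℝ) • (y - x)) t :=
      (hasDerivAt_id t).smul_const (y - x)
    simpa using h1.const_add x
  have hceq : ∀ t : ℝ, c t = x + t • (y - x) := by
    intro t
    simp [hc, AffineMap.lineMap_apply, vsub_eq_sub, vadd_eq_add]
    abel
  have hgd : HasDerivAt g ((fderiv ℝ f x) (y - x)) 0 := by
    have h2 : HasDerivAt (fun t : ℝ => f (x + t • (y - x)))
        ((fderiv ℝ f (x + (0:ℝ) • (y - x))) (y - x)) 0 :=
      (hdiff (x + (0:ℝ) • (y - x))).hasFDerivAt.comp_hasDerivAt 0 (hcurve 0)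
    have : g = fun t : ℝ => f (x + t • (y - x)) := by
      funext t; simp [hg, hceq t]
    rw [this]
    simpa using h2
  have hslope : deriv g 0 ≤ (g 1 - g 0) / (1 - 0) := by
    have := hgconv.deriv_le_slope (Set.mem_univ (0:ℝ)) (Set.mem_univ (1:ℝ))
      (by norm_num) hgd.differentiableAt
    simpa [slope_def_field, div_one] using this
  have hg0 : g 0 = f x := by simp [hg, hc]
  have hg1 : g 1 = f y := by simp [hg, hc]
  have hderiv : deriv g 0 = (fderiv ℝ f x) (y - x) := hgd.deriv
  have hinner : (fderiv ℝ f x) (y - x) = ⟪gradient f x, y - x⟫ := by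
    have h := ((hdiff x).hasGradientAt).hasFDerivAt
    have : fderiv ℝ f x = (InnerProductSpace.toDual ℝ _) (gradient f x) := h.fderiv
    rw [this]; rfl
  rw [hderiv, hinner, hg0, hg1] at hslope
  linarith [hslope]

/-- Lemma 3.3 (convex case): gain in `1/Δ` on a true successful iteration. -/
theorem stmt_10
    {n : ℕ} (f : EuclideanSpace ℝ (Fin n) → ℝ)
    (hdiff : Differentiable ℝ f)
    (hconv : ConvexOn ℝ Set.univ f)
    (xstar x0 xk xk1 gk : EuclideanSpace ℝ (Fin n))
    (hmin : ∀ x, f xstar ≤ f x)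
    (D θ κ αmax αk : ℝ)
    (hD : 0 < D) (hθ0 : 0 < θ) (hθ1 : θ < 1) (hκ : 0 < κ)
    (hαmax : 0 < αmax) (hαk : 0 < αk)
    (hlevel : ∀ x, f x ≤ f x0 → ‖x - xstar‖ ≤ D)
    (hxk : f xk ≤ f x0)
    (hgrad : ‖gradient f xk‖ ≤ (1 + κ * αmax) * ‖gk‖)
    (hdec : f xk1 ≤ f xk - θ * αk * ‖gk‖ ^ 2)
    (hpos : f xstar < f xk1) :
    θ * αk / (D ^ 2 * (1 + κ * αmax) ^ 2) ≤
      1 / (f xk1 - f xstar) - 1 / (f xk - f xstar) := by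
  set Δ1 := f xk1 - f xstar with hΔ1
  set Δk := f xk - f xstar with hΔk
  have h1 : 0 < Δ1 := by simp [hΔ1]; linarith
  have hgknn : (0:ℝ) ≤ ‖gk‖ := norm_nonneg _
  have h2 : Δ1 + θ * αk * ‖gk‖ ^ 2 ≤ Δk := by simp only [hΔ1, hΔk]; linarith
  set C := D * (1 + κ * αmax) with hC
  have hCpos : 0 < C := by positivity
  -- Δk ≤ C * ‖gk‖
  have hgradle : ⟪gradient f xk, xstar - xk⟫ ≤ f xstar - f xk :=
    grad_lower_bound f hdiff hconv xk xstar
  have hnormle : ‖xstar - xk‖ ≤ D := by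
    have := hlevel xk hxk
    rwa [norm_sub_rev]
  have hcs : -(‖gradient f xk‖ * ‖xstar - xk‖) ≤ ⟪gradient f xk, xstar - xk⟫ :=
    neg_le_of_abs_le (abs_real_inner_le_norm (gradient f xk) (xstar - xk))
  have hΔkle : Δk ≤ ‖gradient f xk‖ * D := by
    have h3 : ‖gradient f xk‖ * ‖xstar - xk‖ ≤ ‖gradient f xk‖ * D :=
      mul_le_mul_of_nonneg_left hnormle (norm_nonneg _)
    simp only [hΔk]
    linarith
  have h3 : Δk ≤ C * ‖gk‖ := by
    calc Δk ≤ ‖gradient f xk‖ * D := hΔkle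
    _ ≤ ((1 + κ * αmax) * ‖gk‖) * D := mul_le_mul_of_nonneg_right hgrad hD.le
    _ = C * ‖gk‖ := by ring
  have hnn : 0 ≤ θ * αk * ‖gk‖ ^ 2 := by positivity
  have hΔkpos : 0 < Δk := by linarith
  have h5 : Δ1 ≤ Δk := by linarith
  have h4 : Δk ^ 2 ≤ C ^ 2 * ‖gk‖ ^ 2 := by nlinarith
  have hden : D ^ 2 * (1 + κ * αmax) ^ 2 = C ^ 2 := by rw [hC]; ring
  rw [hden]
  have hsub : 1 / Δ1 - 1 / Δk = (Δk - Δ1) / (Δ1 * Δk) := by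
    field_simp
  rw [hsub, div_le_div_iff₀ (by positivity) (by positivity)]
  nlinarith [mul_le_mul_of_nonneg_left h4 (mul_pos hθ0 hαk).le,
    mul_le_mul_of_nonneg_right h5 (mul_pos (mul_pos hθ0 hαk) hΔkpos).le,
    mul_le_mul_of_nonneg_left h2 (sq_nonneg C)]
end

section
/- Let $s \in \mathbb{R}^n$, $g \in \mathbb{R}^n$, $b$ a symmetric $n \times n$ matrix, $\sigma > 0$, and define the cubic model $m(s) = f_0 + s^T g + \frac{1}{2} s^T b s + \frac{\sigma}{3}\|s\|^3$. If $s$ satisfies $s^T g + s^T b s + \sigma \|s\|^3 = 0$ and $s^T b s + \sigma \|s\|^3 \geq 0$, then $f_0 - m(s) \geq \frac{\sigma}{6}\|s\|^3$. -/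
open scoped RealInnerProductSpace

/-- Lemma 4.1: model decrease for the cubic model. -/
theorem stmt_13
    {n : ℕ} (s g : EuclideanSpace ℝ (Fin n))
    (b : EuclideanSpace ℝ (Fin n) →L[ℝ] EuclideanSpace ℝ (Fin n))
    (hsymm : ∀ u v, ⟪b u, v⟫ = ⟪u, b v⟫)
    (σ f0 : ℝ) (hσ : 0 < σ)
    (h1 : ⟪s, g⟫ + ⟪s, b s⟫ + σ * ‖s‖ ^ 3 = 0)
    (h2 : 0 ≤ ⟪s, b s⟫ + σ * ‖s‖ ^ 3) :
    σ / 6 * ‖s‖ ^ 3 ≤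
      f0 - (f0 + ⟪s, g⟫ + 1 / 2 * ⟪s, b s⟫ + σ / 3 * ‖s‖ ^ 3) := by
  nlinarith [h1, h2]
end

section
/- Let $f \in C^2(\mathbb{R}^n)$ have $L_H$-Lipschitz Hessian $H$. Let $x, s, g \in \mathbb{R}^n$ and $b$ a matrix with $\|\nabla f(x) - g\| \leq \kappa_g\|s\|^2$ and $\|(H(x) - b)s\| \leq \kappa_H\|s\|^2$. Define $m(s) = f(x) + s^T g + \frac{1}{2}s^T b s + \frac{\sigma}{3}\|s\|^3$. Then $f(x+s) - m(x+s) \leq \left(\kappa_g + \frac{L_H}{2} + \frac{\kappa_H}{2} - \frac{\sigma}{3}\right)\|s\|^3$. -/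
set_option maxHeartbeats 1000000


open scoped RealInnerProductSpace

/-- Key estimate in the proof of Lemma 4.2: bound on `f(x+s) - m(x+s)` for the cubic model. -/
theorem stmt_14
    {n : ℕ} (f : EuclideanSpace ℝ (Fin n) → ℝ)
    (hdiff : Differentiable ℝ f)
    (H : EuclideanSpace ℝ (Fin n) → EuclideanSpace ℝ (Fin n) →L[ℝ] EuclideanSpace ℝ (Fin n))
    (hH : ∀ x, HasFDerivAt (gradient f) (H x) x)
    (LH : ℝ) (hLH : 0 < LH)
    (hHLip : ∀ x y, ‖H x - H y‖ ≤ LH * ‖x - y‖)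
    (x s g : EuclideanSpace ℝ (Fin n))
    (b : EuclideanSpace ℝ (Fin n) →L[ℝ] EuclideanSpace ℝ (Fin n))
    (κg κH σ : ℝ) (hκg : 0 < κg) (hκH : 0 < κH) (hσ : 0 < σ)
    (hg : ‖gradient f x - g‖ ≤ κg * ‖s‖ ^ 2)
    (hb : ‖(H x - b) s‖ ≤ κH * ‖s‖ ^ 2) :
    f (x + s) - (f x + ⟪s, g⟫ + 1 / 2 * ⟪s, b s⟫ + σ / 3 * ‖s‖ ^ 3) ≤
      (κg + LH / 2 + κH / 2 - σ / 3) * ‖s‖ ^ 3 := by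
  -- Step A: second-order accuracy of the gradient along the segment
  have hgrad : ∀ t : ℝ, 0 ≤ t → t ≤ 1 →
      ‖gradient f (x + t • s) - gradient f x - H x (t • s)‖ ≤ LH * t ^ 2 * ‖s‖ ^ 2 := by
    intro t ht0 ht1
    have key := Convex.norm_image_sub_le_of_norm_hasFDerivWithin_le'
      (f := gradient f) (f' := H) (φ := H x) (C := LH * ‖t • s‖)
      (s := segment ℝ x (x + t • s))
      (fun z _ => (hH z).hasFDerivWithinAt)
      (fun z hz => by
        rw [segment_eq_image' ℝ x (x + t • s)] at hz
        obtain ⟨u, hu, rfl⟩ := hz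
        obtain ⟨hu0, hu1⟩ := hu
        have hnz : ‖x + u • (x + t • s - x) - x‖ ≤ ‖t • s‖ := by
          rw [add_sub_cancel_left, add_sub_cancel_left, norm_smul,
            Real.norm_eq_abs, abs_of_nonneg hu0]
          have := norm_nonneg (t • s)
          nlinarith
        calc ‖H (x + u • (x + t • s - x)) - H x‖
            ≤ LH * ‖x + u • (x + t • s - x) - x‖ := hHLip _ _
          _ ≤ LH * ‖t • s‖ := by nlinarith [norm_nonneg (x + u • (x + t • s - x) - x)])
      (convex_segment _ _) (left_mem_segment ℝ _ _) (right_mem_segment ℝ _ _)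
    have hns : ‖t • s‖ = t * ‖s‖ := by rw [norm_smul, Real.norm_eq_abs, abs_of_nonneg ht0]
    calc ‖gradient f (x + t • s) - gradient f x - H x (t • s)‖
        = ‖gradient f (x + t • s) - gradient f x - H x (x + t • s - x)‖ := by
          rw [add_sub_cancel_left]
      _ ≤ LH * ‖t • s‖ * ‖x + t • s - x‖ := key
      _ = LH * t ^ 2 * ‖s‖ ^ 2 := by rw [add_sub_cancel_left, hns]; ring
  -- Step B: derivative of φ(t) = f(x + t s)
  have hφ : ∀ t : ℝ, HasDerivAt (fun t : ℝ => f (x + t • s))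
      ⟪gradient f (x + t • s), s⟫ t := by
    intro t
    have hc : HasDerivAt (fun t : ℝ => x + t • s) s t := by
      simpa using ((hasDerivAt_id t).smul_const s).const_add x
    have hf' : HasFDerivAt f
        (InnerProductSpace.toDual ℝ (EuclideanSpace ℝ (Fin n)) (gradient f (x + t • s)))
        (x + t • s) := (hdiff _).hasGradientAt.hasFDerivAt
    have := hf'.comp_hasDerivAt t hc
    simp only [InnerProductSpace.toDual_apply_apply] at this
    exact this
  -- Step C: monotone comparison function
  set A : ℝ := ⟪gradient f x, s⟫ with hA
  set B : ℝ := ⟪H x s, s⟫ with hB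
  set χ : ℝ → ℝ := fun t =>
    LH * ‖s‖ ^ 3 * t ^ 2 / 2 - (f (x + t • s) - t * A - t ^ 2 / 2 * B) with hχ
  have hχ' : ∀ t : ℝ, HasDerivAt χ
      (LH * ‖s‖ ^ 3 * t - (⟪gradient f (x + t • s), s⟫ - A - t * B)) t := by
    intro t
    have h1 : HasDerivAt (fun t : ℝ => LH * ‖s‖ ^ 3 * t ^ 2 / 2)
        (LH * ‖s‖ ^ 3 * t) t := by
      have := ((hasDerivAt_pow 2 t).const_mul (LH * ‖s‖ ^ 3)).div_const 2
      exact this.congr_deriv (by ring)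
    have h2 : HasDerivAt (fun t : ℝ => f (x + t • s) - t * A - t ^ 2 / 2 * B)
        (⟪gradient f (x + t • s), s⟫ - A - t * B) t := by
      have ha : HasDerivAt (fun t : ℝ => t * A) A t := by
        simpa using (hasDerivAt_id t).mul_const A
      have hbb : HasDerivAt (fun t : ℝ => t ^ 2 / 2 * B) (t * B) t := by
        have := ((hasDerivAt_pow 2 t).div_const 2).mul_const B
        exact this.congr_deriv (by ring)
      exact ((hφ t).sub ha).sub hbb
    exact h1.sub h2
  have hmono : MonotoneOn χ (Set.Icc 0 1) := by
    apply monotoneOn_of_deriv_nonneg (convex_Icc 0 1)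
    · exact fun t _ => ((hχ' t).continuousAt).continuousWithinAt
    · exact fun t _ => ((hχ' t).differentiableAt).differentiableWithinAt
    · intro t ht
      rw [interior_Icc] at ht
      rw [(hχ' t).deriv]
      have ht0 : (0:ℝ) ≤ t := le_of_lt ht.1
      have ht1 : t ≤ 1 := le_of_lt ht.2
      have hib : ⟪gradient f (x + t • s), s⟫ - A - t * B
          = ⟪gradient f (x + t • s) - gradient f x - H x (t • s), s⟫ := by
        rw [hA, hB]
        simp [inner_sub_left, inner_smul_left]
      have hle : ⟪gradient f (x + t • s), s⟫ - A - t * B ≤ LH * t ^ 2 * ‖s‖ ^ 3 := by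
        rw [hib]
        calc ⟪gradient f (x + t • s) - gradient f x - H x (t • s), s⟫
            ≤ ‖gradient f (x + t • s) - gradient f x - H x (t • s)‖ * ‖s‖ :=
              real_inner_le_norm _ _
          _ ≤ (LH * t ^ 2 * ‖s‖ ^ 2) * ‖s‖ := by
              have := norm_nonneg s
              exact mul_le_mul_of_nonneg_right (hgrad t ht0 ht1) this
          _ = LH * t ^ 2 * ‖s‖ ^ 3 := by ring
      have : LH * t ^ 2 * ‖s‖ ^ 3 ≤ LH * ‖s‖ ^ 3 * t := by
        have hs3 : (0:ℝ) ≤ ‖s‖ ^ 3 := by positivity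
        nlinarith [mul_nonneg (mul_nonneg hLH.le hs3) (mul_nonneg ht0 (sub_nonneg.2 ht1))]
      linarith
  have hχ01 : χ 0 ≤ χ 1 := hmono (by norm_num) (by norm_num) zero_le_one
  have hTaylor : f (x + s) - f x - A - 1 / 2 * B ≤ LH / 2 * ‖s‖ ^ 3 := by
    have h0 : χ 0 = -(f x) := by simp [hχ]
    have h1 : χ 1 = LH * ‖s‖ ^ 3 / 2 - (f (x + s) - A - 1 / 2 * B) := by
      simp [hχ]
    rw [h0, h1] at hχ01
    linarith
  -- Step D: combine
  have hB' : 1 / 2 * B - 1 / 2 * ⟪s, b s⟫ ≤ κH / 2 * ‖s‖ ^ 3 := by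
    have : B - ⟪s, b s⟫ = ⟪(H x - b) s, s⟫ := by
      rw [hB, real_inner_comm (b s) s]
      simp [inner_sub_left]
    have hle : ⟪(H x - b) s, s⟫ ≤ κH * ‖s‖ ^ 2 * ‖s‖ :=
      le_trans (real_inner_le_norm _ _)
        (mul_le_mul_of_nonneg_right hb (norm_nonneg s))
    have : B - ⟪s, b s⟫ ≤ κH * ‖s‖ ^ 3 := by rw [this]; nlinarith [norm_nonneg s]
    linarith
  have hA' : A - ⟪s, g⟫ ≤ κg * ‖s‖ ^ 3 := by
    have : A - ⟪s, g⟫ = ⟪gradient f x - g, s⟫ := by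
      rw [hA, real_inner_comm g s, inner_sub_left]
    rw [this]
    calc ⟪gradient f x - g, s⟫ ≤ ‖gradient f x - g‖ * ‖s‖ := real_inner_le_norm _ _
      _ ≤ κg * ‖s‖ ^ 2 * ‖s‖ := mul_le_mul_of_nonneg_right hg (norm_nonneg s)
      _ = κg * ‖s‖ ^ 3 := by ring
  have hsum : f (x + s) = f (x + (1:ℝ) • s) := by norm_num
  linarith
end

section
/- Under the hypotheses: $f \in C^2$ with $L$-Lipschitz gradient and $L_H$-Lipschitz Hessian, $\|\nabla f(x) - g\| \leq \kappa_g\|s\|^2$, $\|(H(x) - b)s\| \leq \kappa_H\|s\|^2$, and the termination condition $\|\nabla m(x+s)\| \leq \kappa_\theta \min\{1, \|s\|\}\|g\|$ with $\kappa_\theta \in (0,1)$, where $\nabla m(x+s) = g + bs + \sigma\|s\| s$, it holds that $(1 - \kappa_\theta)\|\nabla f(x+s)\| \leq (2\kappa_g + \kappa_H + L + L_H + \sigma)\|s\|^2$, and hence $\|s\| \geq \sqrt{\frac{(1-\kappa_\theta)\|\nabla f(x+s)\|}{\sigma + \kappa_s}}$ with $\kappa_s = 2\kappa_g + \kappa_H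 + L + L_H$. -/
open scoped RealInnerProductSpace

/-- Lemma 4.3: lower bound on the ARC step length. -/
theorem stmt_15
    {n : ℕ} (f : EuclideanSpace ℝ (Fin n) → ℝ)
    (hdiff : Differentiable ℝ f)
    (L : ℝ) (hL : 0 < L)
    (hgLip : ∀ x y, ‖gradient f x - gradient f y‖ ≤ L * ‖x - y‖)
    (H : EuclideanSpace ℝ (Fin n) → EuclideanSpace ℝ (Fin n) →L[ℝ] EuclideanSpace ℝ (Fin n))
    (hH : ∀ x, HasFDerivAt (gradient f) (H x) x)
    (LH : ℝ) (hLH : 0 < LH)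
    (hHLip : ∀ x y, ‖H x - H y‖ ≤ LH * ‖x - y‖)
    (x s g : EuclideanSpace ℝ (Fin n))
    (b : EuclideanSpace ℝ (Fin n) →L[ℝ] EuclideanSpace ℝ (Fin n))
    (κg κH σ κθ : ℝ) (hκg : 0 < κg) (hκH : 0 < κH) (hσ : 0 < σ)
    (hκθ0 : 0 < κθ) (hκθ1 : κθ < 1)
    (hg : ‖gradient f x - g‖ ≤ κg * ‖s‖ ^ 2)
    (hb : ‖(H x - b) s‖ ≤ κH * ‖s‖ ^ 2)
    (hterm : ‖g + b s + (σ * ‖s‖) • s‖ ≤ κθ * min 1 ‖s‖ * ‖g‖) :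
    (1 - κθ) * ‖gradient f (x + s)‖ ≤ (2 * κg + κH + L + LH + σ) * ‖s‖ ^ 2 ∧
      Real.sqrt ((1 - κθ) * ‖gradient f (x + s)‖ / (σ + (2 * κg + κH + L + LH))) ≤ ‖s‖ := by
  set gp := gradient f (x + s) with hgp
  clear_value gp
  -- Taylor-type bound via mean value inequality on segment
  have hseg : ∀ y ∈ segment ℝ x (x + s), ‖y - x‖ ≤ ‖s‖ := by
    rintro y ⟨a, c, ha, hc, hac, rfl⟩
    have : a • x + c • (x + s) - x = c • s := by
      have : a = 1 - c := by linarith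
      subst this
      module
    rw [this, norm_smul, Real.norm_eq_abs, abs_of_nonneg hc]
    nlinarith [norm_nonneg s]
  have hkey : ‖gp - gradient f x - H x s‖ ≤ LH * ‖s‖ ^ 2 := by
    rw [hgp]
    have hG : ∀ y ∈ segment ℝ x (x + s),
        HasFDerivWithinAt (fun y => gradient f y - H x y) (H y - H x) (segment ℝ x (x + s)) y := by
      intro y _
      exact ((hH y).sub ((H x).hasFDerivAt)).hasFDerivWithinAt
    have hbound : ∀ y ∈ segment ℝ x (x + s), ‖H y - H x‖ ≤ LH * ‖s‖ := by
      intro y hy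
      calc ‖H y - H x‖ ≤ LH * ‖y - x‖ := hHLip y x
        _ ≤ LH * ‖s‖ := by nlinarith [hseg y hy]
    have := (convex_segment x (x + s)).norm_image_sub_le_of_norm_hasFDerivWithin_le
      hG hbound (left_mem_segment ℝ x (x + s)) (right_mem_segment ℝ x (x + s))
    have heq : (gradient f (x + s) - H x (x + s)) - (gradient f x - H x x)
        = gradient f (x + s) - gradient f x - H x s := by
      rw [map_add]
      abel
    rw [heq] at this
    calc ‖gradient f (x + s) - gradient f x - H x s‖ ≤ LH * ‖s‖ * ‖x + s - x‖ := this
      _ = LH * ‖s‖ ^ 2 := by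
          have : x + s - x = s := by abel
          rw [this]; ring
  -- bound on ‖g‖
  have hgx : ‖gradient f x‖ ≤ ‖gp‖ + L * ‖s‖ := by
    have h1 := hgLip x (x + s)
    have h2 : x - (x + s) = -s := by abel
    rw [h2, norm_neg, ← hgp] at h1
    have h3 := norm_add_le (gradient f x - gp) gp
    have h4 : gradient f x - gp + gp = gradient f x := by abel
    rw [h4] at h3
    linarith
  have hgb : ‖g‖ ≤ κg * ‖s‖ ^ 2 + L * ‖s‖ + ‖gp‖ := by
    have h3 := norm_add_le (g - gradient f x) (gradient f x)
    have h4 : g - gradient f x + gradient f x = g := by abel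
    rw [h4, norm_sub_rev] at h3
    linarith
  -- decomposition of gp
  have hdecomp : gp = (g + b s + (σ * ‖s‖) • s) + (gradient f x - g) + ((H x - b) s)
      + (gp - gradient f x - H x s) - (σ * ‖s‖) • s := by
    simp only [ContinuousLinearMap.sub_apply]
    abel
  have hsmul : ‖(σ * ‖s‖) • s‖ = σ * ‖s‖ ^ 2 := by
    rw [norm_smul, Real.norm_eq_abs, abs_of_nonneg (by positivity)]
    ring
  have hgpb : ‖gp‖ ≤ κθ * min 1 ‖s‖ * ‖g‖ + κg * ‖s‖ ^ 2 + κH * ‖s‖ ^ 2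
      + LH * ‖s‖ ^ 2 + σ * ‖s‖ ^ 2 := by
    calc ‖gp‖ = ‖(g + b s + (σ * ‖s‖) • s) + (gradient f x - g) + ((H x - b) s)
        + (gp - gradient f x - H x s) - (σ * ‖s‖) • s‖ := by rw [← hdecomp]
      _ ≤ ‖(g + b s + (σ * ‖s‖) • s) + (gradient f x - g) + ((H x - b) s)
          + (gp - gradient f x - H x s)‖ + ‖(σ * ‖s‖) • s‖ := norm_sub_le _ _
      _ ≤ ‖g + b s + (σ * ‖s‖) • s‖ + ‖gradient f x - g‖ + ‖(H x - b) s‖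
          + ‖gp - gradient f x - H x s‖ + ‖(σ * ‖s‖) • s‖ := by
            gcongr <;> first
              | exact (norm_add_le _ _).trans (by gcongr <;> exact (norm_add_le _ _).trans (by gcongr; exact norm_add_le _ _))
              | exact le_rfl
      _ ≤ κθ * min 1 ‖s‖ * ‖g‖ + κg * ‖s‖ ^ 2 + κH * ‖s‖ ^ 2
          + LH * ‖s‖ ^ 2 + σ * ‖s‖ ^ 2 := by
            rw [hsmul]; linarith
  -- bound min term
  clear hdecomp hterm hg hb hkey hgx hsmul hseg hgLip hHLip hH hdiff hgp
  clear f H b x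
  have hmin1 : min 1 ‖s‖ ≤ 1 := min_le_left _ _
  have hmin2 : min 1 ‖s‖ ≤ ‖s‖ := min_le_right _ _
  have hmin0 : 0 ≤ min 1 ‖s‖ := le_min zero_le_one (norm_nonneg s)
  have hminb : min 1 ‖s‖ * ‖g‖ ≤ κg * ‖s‖ ^ 2 + L * ‖s‖ ^ 2 + ‖gp‖ := by
    have h1 : min 1 ‖s‖ * ‖g‖ ≤ min 1 ‖s‖ * (κg * ‖s‖ ^ 2 + L * ‖s‖ + ‖gp‖) := by
      exact mul_le_mul_of_nonneg_left hgb hmin0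
    have h2 : min 1 ‖s‖ * (κg * ‖s‖ ^ 2) ≤ κg * ‖s‖ ^ 2 := by
      nlinarith [mul_nonneg (mul_nonneg (sub_nonneg.2 hmin1) hκg.le) (sq_nonneg ‖s‖)]
    have h3 : min 1 ‖s‖ * (L * ‖s‖) ≤ L * ‖s‖ ^ 2 := by
      nlinarith [mul_nonneg (mul_nonneg (sub_nonneg.2 hmin2) hL.le) (norm_nonneg s)]
    have h4 : min 1 ‖s‖ * ‖gp‖ ≤ ‖gp‖ := by
      nlinarith [mul_nonneg (sub_nonneg.2 hmin1) (norm_nonneg gp)]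
    nlinarith
  have hmain : (1 - κθ) * ‖gp‖ ≤ (2 * κg + κH + L + LH + σ) * ‖s‖ ^ 2 := by
    have hA : κθ * (min 1 ‖s‖ * ‖g‖) ≤ κθ * (κg * ‖s‖ ^ 2 + L * ‖s‖ ^ 2 + ‖gp‖) :=
      mul_le_mul_of_nonneg_left hminb hκθ0.le
    have p1 : 0 ≤ (1 - κθ) * κg * ‖s‖ ^ 2 :=
      mul_nonneg (mul_nonneg (by linarith) hκg.le) (sq_nonneg _)
    have p2 : 0 ≤ (1 - κθ) * L * ‖s‖ ^ 2 :=
      mul_nonneg (mul_nonneg (by linarith) hL.le) (sq_nonneg _)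
    nlinarith [hgpb, hA, p1, p2]
  refine ⟨hmain, ?_⟩
  have hB : 0 < σ + (2 * κg + κH + L + LH) := by linarith
  have hdiv : (1 - κθ) * ‖gp‖ / (σ + (2 * κg + κH + L + LH)) ≤ ‖s‖ ^ 2 := by
    rw [div_le_iff₀ hB]
    nlinarith [hmain]
  calc Real.sqrt ((1 - κθ) * ‖gp‖ / (σ + (2 * κg + κH + L + LH)))
      ≤ Real.sqrt (‖s‖ ^ 2) := Real.sqrt_le_sqrt hdiv
    _ = ‖s‖ := Real.sqrt_sq (norm_nonneg s)
end

section
/- Combining: if $f(x^k) - f(x^{k+1}) \geq \frac{\theta}{6}\sigma_k \|s^k\|^3$ and $\|s^k\| \geq \sqrt{\frac{(1-\kappa_\theta)\|\nabla f(x^{k+1})\|}{\sigma_k + \kappa_s}}$ with $\sigma_k \geq \sigma_{\min} > 0$ and $\kappa_s \leq \sigma_c$, then $f(x^k) - f(x^{k+1}) \geq \frac{\theta (1-\kappa_\theta)^{3/2} \sigma_{\min}}{12\sqrt{2}\,(\max\{\sigma_k, \sigma_c\})^{3/2}}\, \|\nabla f(x^{k+1})\|^{3/2}$. -/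
/-- Lemma 4.4: per-iteration function decrease of ARC on true successful iterations. -/
theorem stmt_16
    (fk fk1 snorm gnorm σk σmin σc κs θ κθ : ℝ)
    (hθ0 : 0 < θ) (hθ1 : θ < 1) (hκθ0 : 0 < κθ) (hκθ1 : κθ < 1)
    (hσmin : 0 < σmin) (hσk : σmin ≤ σk) (hκs : 0 < κs) (hκsσc : κs ≤ σc)
    (hsnorm : 0 ≤ snorm) (hgnorm : 0 ≤ gnorm)
    (hdec : θ / 6 * σk * snorm ^ 3 ≤ fk - fk1)
    (hstep : Real.sqrt ((1 - κθ) * gnorm / (σk + κs)) ≤ snorm) :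
    θ * (1 - κθ) ^ ((3 : ℝ) / 2) * σmin /
        (12 * Real.sqrt 2 * (max σk σc) ^ ((3 : ℝ) / 2)) * gnorm ^ ((3 : ℝ) / 2) ≤
      fk - fk1 := by
  have hσk0 : (0:ℝ) < σk := lt_of_lt_of_le hσmin hσk
  have hκθ' : (0:ℝ) ≤ 1 - κθ := by linarith
  have hden : (0:ℝ) < σk + κs := by linarith
  set M := max σk σc with hM
  have hM0 : (0:ℝ) < M := lt_of_lt_of_le hσk0 (le_max_left _ _)
  have hM32 : (0:ℝ) < M ^ ((3:ℝ)/2) := Real.rpow_pos_of_pos hM0 _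
  have hS32 : (0:ℝ) < (σk + κs) ^ ((3:ℝ)/2) := Real.rpow_pos_of_pos hden _
  have hA0 : (0:ℝ) ≤ (1 - κθ) * gnorm / (σk + κs) :=
    div_nonneg (mul_nonneg hκθ' hgnorm) hden.le
  -- snorm^3 ≥ A^(3/2)
  have hsnorm3 : ((1 - κθ) * gnorm / (σk + κs)) ^ ((3:ℝ)/2) ≤ snorm ^ 3 := by
    have h1 : (Real.sqrt ((1 - κθ) * gnorm / (σk + κs))) ^ 3 ≤ snorm ^ 3 :=
      pow_le_pow_left₀ (Real.sqrt_nonneg _) hstep 3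
    calc ((1 - κθ) * gnorm / (σk + κs)) ^ ((3:ℝ)/2)
        = (Real.sqrt ((1 - κθ) * gnorm / (σk + κs))) ^ 3 := by
          rw [show (3:ℝ)/2 = (1/2) * 3 by ring, Real.rpow_mul hA0,
            ← Real.sqrt_eq_rpow, ← Real.rpow_natCast (Real.sqrt _) 3]
          norm_num
      _ ≤ snorm ^ 3 := h1
  -- expand A^(3/2)
  have hexp : ((1 - κθ) * gnorm / (σk + κs)) ^ ((3:ℝ)/2)
      = (1 - κθ) ^ ((3:ℝ)/2) * gnorm ^ ((3:ℝ)/2) / (σk + κs) ^ ((3:ℝ)/2) := by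
    rw [Real.div_rpow (mul_nonneg hκθ' hgnorm) hden.le, Real.mul_rpow hκθ' hgnorm]
  -- key scalar inequality
  have hkey : σmin * (σk + κs) ^ ((3:ℝ)/2) ≤ σk * (2 * Real.sqrt 2 * M ^ ((3:ℝ)/2)) := by
    have h2M : σk + κs ≤ 2 * M := by
      have h1 : σk ≤ M := le_max_left _ _
      have h2 : κs ≤ M := le_trans hκsσc (le_max_right _ _)
      linarith
    have hpow : (σk + κs) ^ ((3:ℝ)/2) ≤ (2 * M) ^ ((3:ℝ)/2) :=
      Real.rpow_le_rpow hden.le h2M (by norm_num)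
    have h2M32 : (2 * M) ^ ((3:ℝ)/2) = 2 * Real.sqrt 2 * M ^ ((3:ℝ)/2) := by
      rw [Real.mul_rpow (by norm_num) hM0.le,
        show (3:ℝ)/2 = 1 + 1/2 by ring, Real.rpow_add (by norm_num : (0:ℝ) < 2),
        Real.rpow_one, ← Real.sqrt_eq_rpow]
    calc σmin * (σk + κs) ^ ((3:ℝ)/2) ≤ σk * (2 * M) ^ ((3:ℝ)/2) :=
          mul_le_mul hσk hpow hS32.le hσk0.le
      _ = σk * (2 * Real.sqrt 2 * M ^ ((3:ℝ)/2)) := by rw [h2M32]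
  -- combine
  have hfinal : θ * (1 - κθ) ^ ((3:ℝ)/2) * σmin /
      (12 * Real.sqrt 2 * M ^ ((3:ℝ)/2)) * gnorm ^ ((3:ℝ)/2)
      ≤ θ / 6 * σk * (((1 - κθ) * gnorm / (σk + κs)) ^ ((3:ℝ)/2)) := by
    have hc0 : (0:ℝ) ≤ (1 - κθ) ^ ((3:ℝ)/2) := Real.rpow_nonneg hκθ' _
    have hg0 : (0:ℝ) ≤ gnorm ^ ((3:ℝ)/2) := Real.rpow_nonneg hgnorm _
    have hs2 : (0:ℝ) < Real.sqrt 2 := Real.sqrt_pos.mpr (by norm_num)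
    have hcoef : θ * (1 - κθ) ^ ((3:ℝ)/2) * σmin / (12 * Real.sqrt 2 * M ^ ((3:ℝ)/2))
        ≤ θ / 6 * σk * (1 - κθ) ^ ((3:ℝ)/2) / (σk + κs) ^ ((3:ℝ)/2) := by
      rw [div_le_div_iff₀ (by positivity) hS32]
      nlinarith [mul_le_mul_of_nonneg_left hkey (mul_nonneg hθ0.le hc0)]
    rw [hexp, show θ / 6 * σk * ((1 - κθ) ^ ((3:ℝ)/2) * gnorm ^ ((3:ℝ)/2) / (σk + κs) ^ ((3:ℝ)/2))
        = θ / 6 * σk * (1 - κθ) ^ ((3:ℝ)/2) / (σk + κs) ^ ((3:ℝ)/2) * gnorm ^ ((3:ℝ)/2) by ring]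
    exact mul_le_mul_of_nonneg_right hcoef hg0
  calc θ * (1 - κθ) ^ ((3:ℝ)/2) * σmin /
      (12 * Real.sqrt 2 * M ^ ((3:ℝ)/2)) * gnorm ^ ((3:ℝ)/2)
      ≤ θ / 6 * σk * (((1 - κθ) * gnorm / (σk + κs)) ^ ((3:ℝ)/2)) := hfinal
    _ ≤ θ / 6 * σk * snorm ^ 3 :=
        mul_le_mul_of_nonneg_left hsnorm3 (by positivity)
    _ ≤ fk - fk1 := hdec
end
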